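/- arXiv:1104.5277 — 3 statements merged into one kernel-verified Lean document; each statement's English description precedes it below -/
import Mathlib

section
/- Let K^λ, λ ∈ [0,1), be a family of bounded selfadjoint operators on L²(𝕋^d) with sup_λ ‖K^λ‖ < ∞ and K^λ → K^σ strongly as λ → σ for each σ ∈ [0,1). Set A^λ = −Δ + K^λ, A = A⁰, and let P_n be the orthogonal projection onto the first n eigenvectors of A; define A_n^λ = P_n A^λ P_n. If σ belongs to the resolvent set of A, then there exist N > 0 and λ* > 0 such that σ belongs to the resolvent set of A_n^λ for all n > N and all 0 < λ < λ*. -/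
open Filter Topology

/-- The truncated operator `A_n^λ = P_n A^λ P_n`, expressed as an `n × n` matrix in
the orthonormal eigenbasis `v` of `A = A⁰` (with ascending eigenvalues `α`):
`A^λ = A⁰ + (K^λ − K⁰)`, so the matrix entries are
`α_i δ_{ij} + ⟪(K^λ − K⁰) v_j, v_i⟫`. -/
noncomputable def truncMat {H : Type*} [NormedAddCommGroup H] [InnerProductSpace ℝ H]
    (v : ℕ → H) (α : ℕ → ℝ) (K : ℝ → H →L[ℝ] H) (l : ℝ) (n : ℕ) :
    Matrix (Fin n) (Fin n) ℝ :=
  Matrix.of fun i j =>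
    (if (i : ℕ) = (j : ℕ) then α i else 0) + (inner ℝ ((K l - K 0) (v j)) (v i) : ℝ)

set_option maxHeartbeats 2000000 in
/-- Let `K^λ`, `λ ∈ [0,1)`, be bounded selfadjoint operators on `L²(𝕋^d)`,
uniformly bounded and strongly continuous in `λ`.  Set `A^λ = −Δ + K^λ`, `A = A⁰`;
`A⁰` has an orthonormal Hilbert basis of eigenvectors `v_j` with ascending eigenvalues
`α_j → ∞` (discrete spectrum), and `A_n^λ = P_n A^λ P_n` where `P_n` projects onto the
first `n` eigenvectors of `A`.  If `σ` is in the resolvent set of `A` (i.e. `σ` is not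
one of the eigenvalues `α_j`), then there exist `N > 0` and `λ* > 0` such that `σ` is
in the resolvent set of `A_n^λ` for all `n > N` and all `0 < λ < λ*`. -/
theorem resolvent_of_truncated {H : Type*} [NormedAddCommGroup H]
    [InnerProductSpace ℝ H] [CompleteSpace H]
    (v : ℕ → H) (α : ℕ → ℝ) (K : ℝ → H →L[ℝ] H)
    (hON : Orthonormal ℝ v)
    (hcomp : (Submodule.span ℝ (Set.range v)).topologicalClosure = ⊤)
    (hmono : Monotone α) (htop : Tendsto α atTop atTop)
    (hKsa : ∀ l ∈ Set.Ico (0 : ℝ) 1, IsSelfAdjoint (K l))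
    (hKbdd : ∃ C : ℝ, ∀ l ∈ Set.Ico (0 : ℝ) 1, ‖K l‖ ≤ C)
    (hKstrong : ∀ σ ∈ Set.Ico (0 : ℝ) 1, ∀ u : H,
      Tendsto (fun l => K l u) (nhdsWithin σ (Set.Ico 0 1)) (𝓝 (K σ u)))
    (σ : ℝ) (hσ : σ ∉ Set.range α) :
    ∃ N : ℕ, ∃ lstar : ℝ, 0 < lstar ∧ lstar ≤ 1 ∧
      ∀ n > N, ∀ l : ℝ, 0 < l → l < lstar →
        (truncMat v α K l n - σ • (1 : Matrix (Fin n) (Fin n) ℝ)).det ≠ 0 := by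
  classical
  obtain ⟨C0, hC0⟩ := hKbdd
  set C := max C0 0 with hCdef
  have hCnn : (0:ℝ) ≤ C := le_max_right _ _
  have hKle : ∀ l ∈ Set.Ico (0:ℝ) 1, ‖K l‖ ≤ C := fun l hl =>
    (hC0 l hl).trans (le_max_left _ _)
  have h0I : (0:ℝ) ∈ Set.Ico (0:ℝ) 1 := ⟨le_refl 0, one_pos⟩
  -- choose N
  obtain ⟨N, hN⟩ := Filter.eventually_atTop.1 (htop.eventually_ge_atTop (σ + 4*C + 1))
  -- δ
  have hrne : (Finset.range (N+1)).Nonempty := ⟨0, by simp⟩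
  set δ := (Finset.range (N+1)).inf' hrne (fun i => |α i - σ|) with hδdef
  have hδpos : 0 < δ := by
    rw [hδdef, Finset.lt_inf'_iff]
    intro i _
    have : α i ≠ σ := fun h => hσ ⟨i, h⟩
    exact abs_pos.mpr (sub_ne_zero.mpr this)
  have hδle : ∀ i ≤ N, δ ≤ |α i - σ| := fun i hi =>
    Finset.inf'_le _ (Finset.mem_range.mpr (Nat.lt_succ_of_le hi))
  set η := δ / (2 * Real.sqrt (N+1)) with hηdef
  have hsq : Real.sqrt (N+1) > 0 := Real.sqrt_pos.mpr (by positivity)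
  have hηpos : 0 < η := div_pos hδpos (by positivity)
  have hη2 : ((N:ℝ)+1) * η^2 = δ^2/4 := by
    have h1 : Real.sqrt ((N:ℝ)+1) ^ 2 = (N:ℝ)+1 := Real.sq_sqrt (by positivity)
    rw [hηdef, div_pow, mul_pow]
    rw [mul_div_assoc']
    rw [h1]
    have h2 : ((N:ℝ)+1) ≠ 0 := by positivity
    field_simp
    ring
  -- eventual smallness
  have hev : ∀ᶠ l in nhdsWithin 0 (Set.Ico (0:ℝ) 1),
      ∀ i ∈ Finset.range (N+1), ‖K l (v i) - K 0 (v i)‖ < η := by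
    rw [Filter.eventually_all_finset]
    intro i _
    have h := hKstrong 0 h0I (v i)
    have h2 := Metric.tendsto_nhds.mp h η hηpos
    filter_upwards [h2] with l hl
    rwa [dist_eq_norm] at hl
  obtain ⟨ε, hεpos, hεsub⟩ := Metric.mem_nhdsWithin_iff.mp hev
  refine ⟨N, min ε 1, lt_min hεpos one_pos, min_le_right _ _, ?_⟩
  intro n hn l hl0 hl1
  have hl1' : l < 1 := lt_of_lt_of_le hl1 (min_le_right _ _)
  have hlI : l ∈ Set.Ico (0:ℝ) 1 := ⟨hl0.le, hl1'⟩
  have hlS : ∀ i ∈ Finset.range (N+1), ‖K l (v i) - K 0 (v i)‖ < η := by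
    apply hεsub
    constructor
    · rw [Metric.mem_ball, dist_eq_norm, sub_zero, Real.norm_eq_abs, abs_of_pos hl0]
      exact lt_of_lt_of_le hl1 (min_le_left _ _)
    · exact hlI
  intro hdet
  obtain ⟨x, hx0, hxv⟩ := Matrix.exists_mulVec_eq_zero_iff.mpr hdet
  set D := K l - K 0 with hDdef
  have hDsa : IsSelfAdjoint D := (hKsa l hlI).sub (hKsa 0 h0I)
  have hDsym : ∀ a b : H, (inner ℝ (D a) b : ℝ) = inner ℝ a (D b) := fun a b =>
    hDsa.isSymmetric a b
  have hDnorm : ‖D‖ ≤ 2*C := by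
    calc ‖K l - K 0‖ ≤ ‖K l‖ + ‖K 0‖ := norm_sub_le _ _
    _ ≤ C + C := add_le_add (hKle l hlI) (hKle 0 h0I)
    _ = 2*C := by ring
  set u := ∑ j : Fin n, x j • v (j : ℕ) with hudef
  set w : Fin n → H := fun i => v (i : ℕ) with hwdef
  have hwON : Orthonormal ℝ w := hON.comp _ Fin.val_injective
  set b : Fin n → ℝ := fun i => (inner ℝ (D u) (v (i:ℕ)) : ℝ) with hbdef
  -- key identity
  have hkey : ∀ i : Fin n, (α (i:ℕ) - σ) * x i = - b i := by
    intro i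
    have h := congrFun hxv i
    have hDu : (inner ℝ (D u) (v (i:ℕ)) : ℝ) = ∑ j : Fin n, x j * inner ℝ (D (v (j:ℕ))) (v (i:ℕ)) := by
      rw [hudef, map_sum, sum_inner]
      refine Finset.sum_congr rfl fun j _ => ?_
      rw [map_smul]
      exact real_inner_smul_left _ _ _
    have hterm : ∀ j : Fin n, ((if (i:ℕ) = (j:ℕ) then α (i:ℕ) else 0)
        + (inner ℝ (D (v (j:ℕ))) (v (i:ℕ)) : ℝ) - σ * if i = j then 1 else 0) * x j
        = (if i = j then (α (i:ℕ) - σ) * x j else 0)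
          + x j * (inner ℝ (D (v (j:ℕ))) (v (i:ℕ)) : ℝ) := by
      intro j
      by_cases h : i = j
      · subst h; simp; ring
      · have h' : (i:ℕ) ≠ (j:ℕ) := fun hh => h (Fin.val_injective hh)
        simp [h, h']; ring
    have hexp : (truncMat v α K l n - σ • (1 : Matrix (Fin n) (Fin n) ℝ)).mulVec x i
        = (α (i:ℕ) - σ) * x i + ∑ j : Fin n, x j * (inner ℝ (D (v (j:ℕ))) (v (i:ℕ)) : ℝ) := by
      simp only [Matrix.mulVec, dotProduct, Matrix.sub_apply, Matrix.smul_apply,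
        Matrix.one_apply, truncMat, Matrix.of_apply, smul_eq_mul]
      rw [Finset.sum_congr rfl (fun j _ => hterm j), Finset.sum_add_distrib,
        Finset.sum_ite_eq]
      simp
    rw [hexp, ← hDu, Pi.zero_apply] at h
    linarith [h]
  have hb2 : ∀ i : Fin n, (α (i:ℕ) - σ)^2 * (x i)^2 = (b i)^2 := by
    intro i
    calc (α (i:ℕ) - σ)^2 * (x i)^2 = ((α (i:ℕ) - σ) * x i)^2 := (mul_pow _ _ _).symm
      _ = (- b i)^2 := by rw [hkey i]
      _ = (b i)^2 := neg_sq _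
  have hunorm : ‖u‖^2 = ∑ i : Fin n, (x i)^2 := by
    rw [← real_inner_self_eq_norm_sq]
    have h := hwON.inner_sum x x Finset.univ
    simp only [hwdef] at h
    rw [hudef, h]
    simp [sq]
  have hDu_le : ‖D u‖ ≤ 2*C*‖u‖ :=
    le_trans (D.le_opNorm u) (mul_le_mul_of_nonneg_right hDnorm (norm_nonneg u))
  have hBessel : ∑ i ∈ Finset.univ.filter (fun i : Fin n => ¬ (i:ℕ) ≤ N), (b i)^2 ≤ ‖D u‖^2 := by
    have h := hwON.sum_inner_products_le (s := Finset.univ.filter (fun i : Fin n => ¬ (i:ℕ) ≤ N)) (D u)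
    refine le_trans (le_of_eq ?_) h
    refine Finset.sum_congr rfl fun i _ => ?_
    rw [Real.norm_eq_abs, sq_abs, real_inner_comm]
  have hS2 : ∑ i ∈ Finset.univ.filter (fun i : Fin n => ¬ (i:ℕ) ≤ N), (x i)^2 ≤ ‖u‖^2/4 := by
    have hge : ∀ i ∈ Finset.univ.filter (fun i : Fin n => ¬ (i:ℕ) ≤ N),
        (4*C+1)^2 * (x i)^2 ≤ (b i)^2 := by
      intro i hi
      have hiN : N ≤ (i:ℕ) := by
        simp only [Finset.mem_filter, Finset.mem_univ, true_and, not_le] at hi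
        omega
      have hα : σ + 4*C + 1 ≤ α (i:ℕ) := hN _ hiN
      have h2 : (4*C+1)^2 ≤ (α (i:ℕ) - σ)^2 := by nlinarith
      calc (4*C+1)^2 * (x i)^2 ≤ (α (i:ℕ)-σ)^2 * (x i)^2 :=
            mul_le_mul_of_nonneg_right h2 (sq_nonneg _)
        _ = (b i)^2 := hb2 i
    have hsum : (4*C+1)^2 * ∑ i ∈ Finset.univ.filter (fun i : Fin n => ¬ (i:ℕ) ≤ N), (x i)^2
        ≤ ∑ i ∈ Finset.univ.filter (fun i : Fin n => ¬ (i:ℕ) ≤ N), (b i)^2 := by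
      rw [Finset.mul_sum]; exact Finset.sum_le_sum hge
    have hDu2 : ‖D u‖^2 ≤ 4*C^2*‖u‖^2 := by nlinarith [norm_nonneg (D u), norm_nonneg u]
    have hfin := hsum.trans (hBessel.trans hDu2)
    have hsnn : (0:ℝ) ≤ ∑ i ∈ Finset.univ.filter (fun i : Fin n => ¬ (i:ℕ) ≤ N), (x i)^2 :=
      Finset.sum_nonneg fun i _ => sq_nonneg _
    have key : ∀ S U : ℝ, 0 ≤ S → 0 ≤ U → 0 ≤ C → (4*C+1)^2 * S ≤ 4*C^2*U → S ≤ U/4 := by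
      intro S U hS hU hC h
      nlinarith [mul_nonneg hC hU, mul_nonneg hC hS, mul_nonneg (mul_nonneg hC hC) hS]
    exact key _ _ hsnn (sq_nonneg _) hCnn hfin
  have hS1 : ∑ i ∈ Finset.univ.filter (fun i : Fin n => (i:ℕ) ≤ N), (x i)^2 ≤ ‖u‖^2/4 := by
    have hper : ∀ i ∈ Finset.univ.filter (fun i : Fin n => (i:ℕ) ≤ N),
        (x i)^2 ≤ ‖u‖^2 * η^2 / δ^2 := by
      intro i hi
      have hiN : (i:ℕ) ≤ N := by
        simpa only [Finset.mem_filter, Finset.mem_univ, true_and] using hi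
      have hδi : δ ≤ |α (i:ℕ) - σ| := hδle _ hiN
      have hDvi : ‖D (v (i:ℕ))‖ ≤ η := by
        have := hlS (i:ℕ) (Finset.mem_range.mpr (Nat.lt_succ_of_le hiN))
        simpa [hDdef] using this.le
      have hb_le : |b i| ≤ ‖u‖ * η := by
        calc |b i| = |(inner ℝ u (D (v (i:ℕ))) : ℝ)| := by simp only [hbdef]; rw [hDsym u (v (i:ℕ))]
          _ ≤ ‖u‖ * ‖D (v (i:ℕ))‖ := abs_real_inner_le_norm _ _
          _ ≤ ‖u‖ * η := mul_le_mul_of_nonneg_left hDvi (norm_nonneg u)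
      have h2 : δ^2 * (x i)^2 ≤ (b i)^2 := by
        have h3 := hb2 i
        have hδ2 : δ^2 ≤ (α (i:ℕ)-σ)^2 := by
          nlinarith [sq_abs (α (i:ℕ) - σ), hδpos]
        nlinarith [sq_nonneg (x i)]
      have h3 : (b i)^2 ≤ ‖u‖^2 * η^2 := by
        nlinarith [abs_nonneg (b i), sq_abs (b i), mul_nonneg (norm_nonneg u) hηpos.le]
      rw [le_div_iff₀ (by positivity : (0:ℝ) < δ^2)]
      nlinarith
    have hcard : ((Finset.univ.filter (fun i : Fin n => (i:ℕ) ≤ N)).card : ℝ) ≤ (N:ℝ) + 1 := by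
      have h := Finset.card_le_card_of_injOn (f := Fin.val)
        (s := Finset.univ.filter (fun i : Fin n => (i:ℕ) ≤ N)) (t := Finset.range (N+1))
        (fun a ha => Finset.mem_range.mpr (Nat.lt_succ_of_le (Finset.mem_filter.mp ha).2))
        (fun a _ c _ hac => Fin.val_injective hac)
      calc ((Finset.univ.filter (fun i : Fin n => (i:ℕ) ≤ N)).card : ℝ)
          ≤ ((Finset.range (N+1)).card : ℝ) := Nat.cast_le.mpr h
        _ = (N:ℝ) + 1 := by rw [Finset.card_range]; push_cast; ring
    calc ∑ i ∈ Finset.univ.filter (fun i : Fin n => (i:ℕ) ≤ N), (x i)^2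
        ≤ (Finset.univ.filter (fun i : Fin n => (i:ℕ) ≤ N)).card • (‖u‖^2 * η^2 / δ^2) :=
          Finset.sum_le_card_nsmul _ _ _ hper
      _ = ((Finset.univ.filter (fun i : Fin n => (i:ℕ) ≤ N)).card : ℝ) * (‖u‖^2 * η^2 / δ^2) := by
          rw [nsmul_eq_mul]
      _ ≤ ((N:ℝ)+1) * (‖u‖^2 * η^2 / δ^2) :=
          mul_le_mul_of_nonneg_right hcard (by positivity)
      _ = ‖u‖^2/4 := by
          field_simp
          nlinarith [hη2, sq_nonneg ‖u‖]
  have hsplit : ∑ i : Fin n, (x i)^2 ≤ ‖u‖^2/2 := by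
    rw [← Finset.sum_filter_add_sum_filter_not Finset.univ (fun i : Fin n => (i:ℕ) ≤ N)]
    linarith
  have hzero : ∑ i : Fin n, (x i)^2 = 0 :=
    le_antisymm (by linarith [hunorm]) (Finset.sum_nonneg fun i _ => sq_nonneg _)
  apply hx0
  funext i
  have hxi := (Finset.sum_eq_zero_iff_of_nonneg (fun i _ => sq_nonneg (x i))).mp hzero i
    (Finset.mem_univ i)
  have := pow_eq_zero_iff (n := 2) (by norm_num) |>.mp hxi
  simpa using this
end

section
/- With the hypotheses of the previous statement: if there exist sequences n_k → ∞ and λ_k → 0 such that σ is an eigenvalue of A_{n_k}^{λ_k} for every k, then σ is in the spectrum of A = A⁰. -/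
open Filter Topology

lemma trunc_eigvec {H : Type*} [NormedAddCommGroup H] [InnerProductSpace ℝ H]
    (v : ℕ → H) (α : ℕ → ℝ) (K : ℝ → H →L[ℝ] H) (l σ : ℝ) (n : ℕ)
    (hdet : (truncMat v α K l n - σ • (1 : Matrix (Fin n) (Fin n) ℝ)).det = 0) :
    ∃ d : Fin n → ℝ, (∑ j : Fin n, d j ^ 2 = 1) ∧
      ∀ i : Fin n, (α i - σ) * d i =
        - (inner ℝ ((K l - K 0) (∑ j : Fin n, d j • v (j : ℕ))) (v (i : ℕ)) : ℝ) := by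
  classical
  obtain ⟨c, hc0, hc⟩ := Matrix.exists_mulVec_eq_zero_iff.mpr hdet
  set S : ℝ := ∑ j : Fin n, c j ^ 2 with hSdef
  have hS : 0 < S := by
    rcases Function.ne_iff.mp hc0 with ⟨j0, hj0⟩
    exact Finset.sum_pos' (fun j _ => sq_nonneg _)
      ⟨j0, Finset.mem_univ _, by simpa using sq_pos_of_ne_zero hj0⟩
  have hsqrt : (0:ℝ) < Real.sqrt S := Real.sqrt_pos.mpr hS
  refine ⟨fun j => c j / Real.sqrt S, ?_, ?_⟩
  · have h : ∀ j : Fin n, (c j / Real.sqrt S) ^ 2 = c j ^ 2 / S := fun j => by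
      rw [div_pow, Real.sq_sqrt hS.le]
    rw [Finset.sum_congr rfl (fun j _ => h j), ← Finset.sum_div, ← hSdef, div_self hS.ne']
  · intro i
    have hci : (α i - σ) * c i =
        - ∑ j : Fin n, (inner ℝ ((K l - K 0) (v (j:ℕ))) (v (i:ℕ)) : ℝ) * c j := by
      have h0 := congrFun hc i
      simp only [Matrix.mulVec, dotProduct, truncMat, Matrix.sub_apply,
        Matrix.smul_apply, Matrix.one_apply, Matrix.of_apply, smul_eq_mul,
        Pi.zero_apply] at h0
      have h1 : ∑ j : Fin n, (if (i:ℕ) = (j:ℕ) then α i else 0) * c j = α i * c i := by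
        rw [Finset.sum_eq_single i]
        · simp
        · intro b _ hb
          rw [if_neg (fun h => hb (Fin.ext h.symm)), zero_mul]
        · simp
      have h2 : ∑ j : Fin n, (σ * (if i = j then 1 else 0)) * c j = σ * c i := by
        rw [Finset.sum_eq_single i]
        · simp
        · intro b _ hb; simp [if_neg (Ne.symm hb)]
        · simp
      have hexp : ∑ j : Fin n, ((if (i:ℕ) = (j:ℕ) then α i else 0)
          + (inner ℝ ((K l - K 0) (v (j:ℕ))) (v (i:ℕ)) : ℝ)
          - σ * (if i = j then 1 else 0)) * c j
          = α i * c i + ∑ j : Fin n, (inner ℝ ((K l - K 0) (v (j:ℕ))) (v (i:ℕ)) : ℝ) * c j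
            - σ * c i := by
        simp only [sub_mul, add_mul, Finset.sum_sub_distrib, Finset.sum_add_distrib, h1, h2]
      rw [hexp] at h0
      linarith [h0]
    have hinner : (inner ℝ ((K l - K 0) (∑ j : Fin n, (c j / Real.sqrt S) • v (j:ℕ))) (v (i:ℕ)) : ℝ)
        = (∑ j : Fin n, (inner ℝ ((K l - K 0) (v (j:ℕ))) (v (i:ℕ)) : ℝ) * c j) / Real.sqrt S := by
      rw [map_sum, sum_inner, Finset.sum_div]
      refine Finset.sum_congr rfl fun j _ => ?_
      rw [map_smul, real_inner_smul_left]
      ring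
    rw [hinner, ← neg_div, ← hci]
    ring

/-- With the hypotheses of STATEMENT 5: if there exist sequences
`n_k → ∞` and `λ_k → 0` such that `σ` is an eigenvalue of `A_{n_k}^{λ_k}` for every
`k`, then `σ` is in the spectrum of `A = A⁰` (i.e. `σ` is one of the eigenvalues
`α_j`). -/
theorem eigenvalue_limit_in_spectrum {H : Type*} [NormedAddCommGroup H]
    [InnerProductSpace ℝ H] [CompleteSpace H]
    (v : ℕ → H) (α : ℕ → ℝ) (K : ℝ → H →L[ℝ] H)
    (hON : Orthonormal ℝ v)
    (hcomp : (Submodule.span ℝ (Set.range v)).topologicalClosure = ⊤)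
    (hmono : Monotone α) (htop : Tendsto α atTop atTop)
    (hKsa : ∀ l ∈ Set.Ico (0 : ℝ) 1, IsSelfAdjoint (K l))
    (hKbdd : ∃ C : ℝ, ∀ l ∈ Set.Ico (0 : ℝ) 1, ‖K l‖ ≤ C)
    (hKstrong : ∀ σ ∈ Set.Ico (0 : ℝ) 1, ∀ u : H,
      Tendsto (fun l => K l u) (nhdsWithin σ (Set.Ico 0 1)) (𝓝 (K σ u)))
    (σ : ℝ) (nk : ℕ → ℕ) (lk : ℕ → ℝ)
    (hnk : Tendsto nk atTop atTop) (hlk : Tendsto lk atTop (𝓝 0))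
    (hlk' : ∀ k, lk k ∈ Set.Ioo (0 : ℝ) 1)
    (heig : ∀ k, (truncMat v α K (lk k) (nk k)
      - σ • (1 : Matrix (Fin (nk k)) (Fin (nk k)) ℝ)).det = 0) :
    σ ∈ Set.range α := by
  classical
  by_contra hσ
  have hne : ∀ j : ℕ, α j - σ ≠ 0 := by
    intro j h
    exact hσ ⟨j, by linarith [sub_eq_zero.mp h]⟩
  obtain ⟨C, hC⟩ := hKbdd
  have h0mem : (0:ℝ) ∈ Set.Ico (0:ℝ) 1 := ⟨le_refl 0, one_pos⟩
  have hlkmem : ∀ k, lk k ∈ Set.Ico (0:ℝ) 1 := fun k => ⟨(hlk' k).1.le, (hlk' k).2⟩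
  set D : ℝ := 2 * C with hDdef
  have hC0 : 0 ≤ C := (norm_nonneg (K 0)).trans (hC 0 h0mem)
  have hD0 : 0 ≤ D := by linarith
  set B : ℕ → H →L[ℝ] H := fun k => K (lk k) - K 0 with hBdef
  have hB : ∀ k, ‖B k‖ ≤ D := fun k => by
    calc ‖K (lk k) - K 0‖ ≤ ‖K (lk k)‖ + ‖K 0‖ := norm_sub_le _ _
    _ ≤ D := by have := hC (lk k) (hlkmem k); have := hC 0 h0mem; rw [hDdef]; linarith
  have hBsym : ∀ k, ∀ x y : H, (inner ℝ ((B k) x) y : ℝ) = inner ℝ x ((B k) y) := by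
    intro k
    have hsa : IsSelfAdjoint (B k) := (hKsa _ (hlkmem k)).sub (hKsa 0 h0mem)
    exact fun x y => (ContinuousLinearMap.isSelfAdjoint_iff_isSymmetric.mp hsa) x y
  -- choose normalized eigenvectors
  choose d hd1 hd2 using fun k => trunc_eigvec v α K (lk k) σ (nk k) (heig k)
  set u : ℕ → H := fun k => ∑ j : Fin (nk k), d k j • v (j:ℕ) with hudef
  have hON' : ∀ n : ℕ, Orthonormal ℝ (fun j : Fin n => v (j:ℕ)) :=
    fun n => hON.comp _ Fin.val_injective
  have hu2 : ∀ k, ‖u k‖ ^ 2 = 1 := by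
    intro k
    have h := (hON' (nk k)).inner_sum (d k) (d k) Finset.univ
    simp only [starRingEnd_apply, star_trivial] at h
    rw [← real_inner_self_eq_norm_sq, hudef]
    simp only
    rw [h]
    rw [← hd1 k]
    exact Finset.sum_congr rfl fun j _ => (sq (d k j)).symm
  have hu : ∀ k, ‖u k‖ = 1 := fun k => by
    have := hu2 k
    nlinarith [norm_nonneg (u k)]
  have hBu : ∀ k, ‖(B k) (u k)‖ ≤ D := fun k => by
    calc ‖(B k) (u k)‖ ≤ ‖B k‖ * ‖u k‖ := (B k).le_opNorm _
    _ ≤ D := by rw [hu k, mul_one]; exact hB k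
  -- pointwise bound
  have hpt : ∀ k, ∀ i : Fin (nk k),
      |α (i:ℕ) - σ| * |d k i| ≤ ‖(B k) (v (i:ℕ))‖ := by
    intro k i
    have h := hd2 k i
    rw [← abs_mul, h, abs_neg, hBsym k]
    calc |(inner ℝ (u k) ((B k) (v (i:ℕ))) : ℝ)| ≤ ‖u k‖ * ‖(B k) (v (i:ℕ))‖ :=
      abs_real_inner_le_norm _ _
    _ = ‖(B k) (v (i:ℕ))‖ := by rw [hu k, one_mul]
  -- Bessel bound
  have hBessel : ∀ k, ∀ s : Finset (Fin (nk k)),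
      ∑ i ∈ s, ((α (i:ℕ) - σ) * d k i) ^ 2 ≤ D ^ 2 := by
    intro k s
    have h1 : ∑ i ∈ s, ((α (i:ℕ) - σ) * d k i) ^ 2
        = ∑ i ∈ s, ‖(inner ℝ (v (i:ℕ)) ((B k) (u k)) : ℝ)‖ ^ 2 := by
      refine Finset.sum_congr rfl fun i _ => ?_
      rw [hd2 k i, real_inner_comm, Real.norm_eq_abs, sq_abs, neg_pow]
      ring
    rw [h1]
    calc ∑ i ∈ s, ‖(inner ℝ (v (i:ℕ)) ((B k) (u k)) : ℝ)‖ ^ 2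
        ≤ ‖(B k) (u k)‖ ^ 2 := (hON' (nk k)).sum_inner_products_le _
    _ ≤ D ^ 2 := by nlinarith [hBu k, norm_nonneg ((B k) (u k))]
  -- choose N
  obtain ⟨N, hN⟩ := (htop.eventually (eventually_ge_atTop (σ + (2*D+1)))).exists_forall_of_atTop
  have hgap : ∀ i : ℕ, N ≤ i → 2*D^2 + 1 ≤ (α i - σ)^2 := by
    intro i hi
    have := hN i hi
    nlinarith
  -- high mode mass bound
  have hhigh : ∀ k, ∑ i ∈ Finset.univ.filter (fun i : Fin (nk k) => N ≤ (i:ℕ)), (d k i)^2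
      ≤ 1/2 := by
    intro k
    have h1 : (2*D^2+1) * ∑ i ∈ Finset.univ.filter (fun i : Fin (nk k) => N ≤ (i:ℕ)), (d k i)^2
        ≤ D^2 := by
      rw [Finset.mul_sum]
      calc ∑ i ∈ Finset.univ.filter (fun i : Fin (nk k) => N ≤ (i:ℕ)), (2*D^2+1) * (d k i)^2
          ≤ ∑ i ∈ Finset.univ.filter (fun i : Fin (nk k) => N ≤ (i:ℕ)),
            ((α (i:ℕ) - σ) * d k i)^2 := by
            refine Finset.sum_le_sum fun i hi => ?_
            have hi' := (Finset.mem_filter.mp hi).2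
            have := hgap (i:ℕ) hi'
            nlinarith [sq_nonneg (d k i)]
      _ ≤ D^2 := hBessel k _
    nlinarith [Finset.sum_nonneg (fun i (_ : i ∈ Finset.univ.filter (fun i : Fin (nk k) => N ≤ (i:ℕ))) => sq_nonneg (d k i))]
  -- extended coefficients
  set e : ℕ → ℕ → ℝ := fun k i => if h : i < nk k then d k ⟨i, h⟩ else 0 with hedef
  -- lower bound on low modes
  have hlow : ∀ k, N ≤ nk k → 1/2 ≤ ∑ i ∈ Finset.range N, (e k i)^2 := by
    intro k hk
    have hsplit := Finset.sum_filter_add_sum_filter_not Finset.univ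
      (fun i : Fin (nk k) => N ≤ (i:ℕ)) (fun i => (d k i)^2)
    rw [hd1 k] at hsplit
    have hle : ∑ i ∈ Finset.univ.filter (fun i : Fin (nk k) => ¬ N ≤ (i:ℕ)), (d k i)^2
        ≤ ∑ i ∈ Finset.range N, (e k i)^2 := by
      have himg : ∑ i ∈ Finset.univ.filter (fun i : Fin (nk k) => ¬ N ≤ (i:ℕ)), (d k i)^2
          = ∑ m ∈ (Finset.univ.filter (fun i : Fin (nk k) => ¬ N ≤ (i:ℕ))).image Fin.val,
            (e k m)^2 := by
        rw [Finset.sum_image (fun a _ b _ h => Fin.val_injective h)]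
        refine Finset.sum_congr rfl fun i _ => ?_
        rw [hedef]
        simp only [Fin.is_lt, dif_pos, Fin.eta]
      rw [himg]
      refine Finset.sum_le_sum_of_subset_of_nonneg ?_ (fun i _ _ => sq_nonneg _)
      intro m hm
      simp only [Finset.mem_image, Finset.mem_filter, Finset.mem_univ, true_and] at hm
      obtain ⟨i, hi, rfl⟩ := hm
      exact Finset.mem_range.mpr (not_le.mp hi)
    have := hhigh k
    linarith
  -- each coefficient tends to zero
  have hBv : ∀ x : H, Tendsto (fun k => (B k) x) atTop (𝓝 0) := by
    intro x
    have hlk2 : Tendsto lk atTop (nhdsWithin 0 (Set.Ico (0:ℝ) 1)) :=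
      tendsto_nhdsWithin_iff.mpr ⟨hlk, Eventually.of_forall hlkmem⟩
    have h1 : Tendsto (fun k => K (lk k) x) atTop (𝓝 (K 0 x)) :=
      (hKstrong 0 h0mem x).comp hlk2
    have h2 := h1.sub (tendsto_const_nhds (x := K 0 x))
    simpa [hBdef, ContinuousLinearMap.sub_apply] using h2
  have hei : ∀ i : ℕ, Tendsto (fun k => e k i) atTop (𝓝 0) := by
    intro i
    refine squeeze_zero_norm' (a := fun k => ‖(B k) (v i)‖ / |α i - σ|) ?_ ?_
    · filter_upwards [hnk.eventually (eventually_gt_atTop i)] with k hk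
      have hk' : i < nk k := hk
      rw [hedef]
      simp only [dif_pos hk']
      have hp := hpt k ⟨i, hk'⟩
      simp only [Fin.val_mk] at hp
      rw [Real.norm_eq_abs, le_div_iff₀ (abs_pos.mpr (hne i))]
      calc |d k ⟨i, hk'⟩| * |α i - σ| = |α i - σ| * |d k ⟨i, hk'⟩| := mul_comm _ _
      _ ≤ ‖(B k) (v i)‖ := hp
    · have := (hBv (v i)).norm
      rw [norm_zero] at this
      have := this.div_const |α i - σ|
      simpa using this
  -- contradiction
  have hF : Tendsto (fun k => ∑ i ∈ Finset.range N, (e k i)^2) atTop (𝓝 0) := by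
    have : Tendsto (fun k => ∑ i ∈ Finset.range N, (e k i)^2) atTop
        (𝓝 (∑ i ∈ Finset.range N, (0:ℝ))) := by
      refine tendsto_finset_sum _ fun i _ => ?_
      have := (hei i).pow 2
      simpa using this
    simpa using this
  have hfin : (1:ℝ)/2 ≤ 0 := by
    refine ge_of_tendsto hF ?_
    filter_upwards [hnk.eventually (eventually_ge_atTop N)] with k hk
    exact hlow k hk
  linarith
end

section
/- With the same hypotheses: suppose 0 is in the spectrum of A = A⁰ and neg(A) ≥ 1. Then there exist λ* > 0 and N such that for all 0 < λ < λ* and all n > N, neg(A_n^λ) ≥ neg(A_n). -/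
open Filter Topology

namespace NegCountAux

open Module Submodule

local notation "⟪" x ", " y "⟫" => @inner ℝ _ _ x y

variable {n : ℕ}

lemma repr_eq_zero_of_mem_span (b : OrthonormalBasis (Fin n) ℝ (EuclideanSpace ℝ (Fin n)))
    (t : Finset (Fin n)) {x : EuclideanSpace ℝ (Fin n)}
    (hx : x ∈ span ℝ (b '' (t : Set (Fin n)))) {i : Fin n} (hi : i ∉ t) : b.repr x i = 0 := by
  classical
  induction hx using Submodule.span_induction with
  | mem y hy =>
      obtain ⟨j, hj, rfl⟩ := hy
      rw [b.repr_self]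
      have : i ≠ j := fun h => hi (h ▸ hj)
      simp [EuclideanSpace.single_apply, this]
  | zero => simp
  | add y z _ _ ihy ihz => simp [ihy, ihz]
  | smul a y _ ihy => simp [ihy]

lemma card_le_finrank_span {E : Type*} [NormedAddCommGroup E] [InnerProductSpace ℝ E]
    {ι : Type*} {w : ι → E} (hw : Orthonormal ℝ w) (t : Finset ι) :
    t.card ≤ finrank ℝ (span ℝ (w '' (t : Set ι))) := by
  classical
  set W := span ℝ (w '' (t : Set ι)) with hW
  haveI : FiniteDimensional ℝ W := FiniteDimensional.span_of_finite ℝ ((t : Set ι).toFinite.image w)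
  have hmem : ∀ i : t, w i ∈ W := fun i => subset_span ⟨i, i.2, rfl⟩
  have hind : LinearIndependent ℝ (fun i : t => (⟨w i, hmem i⟩ : W)) := by
    apply LinearIndependent.of_comp W.subtype
    exact (hw.linearIndependent).comp _ Subtype.val_injective
  simpa using hind.fintype_card_le_finrank

lemma clash {V : Type*} [NormedAddCommGroup V] [InnerProductSpace ℝ V] [FiniteDimensional ℝ V]
    {U W : Submodule ℝ V} (h : finrank ℝ V < finrank ℝ U + finrank ℝ W) :
    ∃ x : V, x ≠ 0 ∧ x ∈ U ∧ x ∈ W := by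
  have h1 := Submodule.finrank_sup_add_finrank_inf_eq U W
  have h2 : finrank ℝ (U ⊔ W : Submodule ℝ V) ≤ finrank ℝ V := Submodule.finrank_le _
  have h3 : 0 < finrank ℝ (U ⊓ W : Submodule ℝ V) := by omega
  have hne : (U ⊓ W : Submodule ℝ V) ≠ ⊥ := by
    intro hb; rw [hb] at h3; simp at h3
  obtain ⟨x, hx, hx0⟩ := Submodule.exists_mem_ne_zero_of_ne_bot hne
  exact ⟨x, hx0, hx.1, hx.2⟩

lemma form_eq (b : OrthonormalBasis (Fin n) ℝ (EuclideanSpace ℝ (Fin n))) (μ : Fin n → ℝ)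
    (T : EuclideanSpace ℝ (Fin n) →ₗ[ℝ] EuclideanSpace ℝ (Fin n))
    (hb : ∀ i, T (b i) = μ i • b i) (x : EuclideanSpace ℝ (Fin n)) :
    ⟪T x, x⟫ = ∑ i, μ i * (b.repr x i)^2 := by
  conv_lhs => rw [← b.sum_repr x]
  rw [map_sum]
  simp_rw [map_smul, hb, smul_smul]
  rw [b.orthonormal.inner_sum]
  simp [pow_two]
  ring_nf
  exact Finset.sum_congr rfl fun i _ => by ring

lemma pos_form (b : OrthonormalBasis (Fin n) ℝ (EuclideanSpace ℝ (Fin n))) (μ : Fin n → ℝ)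
    (T : EuclideanSpace ℝ (Fin n) →ₗ[ℝ] EuclideanSpace ℝ (Fin n))
    (hb : ∀ i, T (b i) = μ i • b i) (t : Finset (Fin n)) (ht : ∀ i ∈ t, 0 ≤ μ i)
    {x : EuclideanSpace ℝ (Fin n)} (hx : x ∈ span ℝ (b '' (t : Set (Fin n)))) :
    0 ≤ ⟪T x, x⟫ := by
  rw [form_eq b μ T hb x]
  apply Finset.sum_nonneg
  intro i _
  by_cases hi : i ∈ t
  · exact mul_nonneg (ht i hi) (sq_nonneg _)
  · rw [repr_eq_zero_of_mem_span b t hx hi]; simp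

lemma neg_form (b : OrthonormalBasis (Fin n) ℝ (EuclideanSpace ℝ (Fin n))) (μ : Fin n → ℝ)
    (T : EuclideanSpace ℝ (Fin n) →ₗ[ℝ] EuclideanSpace ℝ (Fin n))
    (hb : ∀ i, T (b i) = μ i • b i) (t : Finset (Fin n)) (ht : ∀ i ∈ t, μ i < 0)
    {x : EuclideanSpace ℝ (Fin n)} (hx : x ∈ span ℝ (b '' (t : Set (Fin n)))) (hx0 : x ≠ 0) :
    ⟪T x, x⟫ < 0 := by
  rw [form_eq b μ T hb x]
  have hzero : ∀ i ∈ Finset.univ \ t, μ i * (b.repr x i)^2 = 0 := by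
    intro i hi
    rw [repr_eq_zero_of_mem_span b t hx (Finset.mem_sdiff.mp hi).2]; simp
  rw [← Finset.sum_subset (Finset.subset_univ t) (fun i _ hi => hzero i (by simp [hi]))]
  have hex : ∃ i ∈ t, b.repr x i ≠ 0 := by
    by_contra hcon
    push_neg at hcon
    apply hx0
    have : b.repr x = 0 := by
      ext i
      by_cases hi : i ∈ t
      · exact hcon i hi
      · exact repr_eq_zero_of_mem_span b t hx hi
    have := b.repr.injective (by simpa using this)
    simpa using this
  obtain ⟨i0, hi0t, hi0⟩ := hex
  have : ∑ i ∈ t, μ i * (b.repr x i)^2 < ∑ i ∈ t, (0:ℝ) := by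
    apply Finset.sum_lt_sum
    · intro i hi; exact mul_nonpos_of_nonpos_of_nonneg (le_of_lt (ht i hi)) (sq_nonneg _)
    · exact ⟨i0, hi0t, mul_neg_of_neg_of_pos (ht i0 hi0t) (by positivity)⟩
  simpa using this

lemma eigen_hb {M : Matrix (Fin n) (Fin n) ℝ} (hM : M.IsHermitian) (i : Fin n) :
    Matrix.toEuclideanLin M (hM.eigenvectorBasis i) = hM.eigenvalues i • hM.eigenvectorBasis i := by
  ext k
  have := congrFun (hM.mulVec_eigenvectorBasis i) k
  simpa [Matrix.toEuclideanLin_apply] using this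

lemma diag_hb (d : Fin n → ℝ) (i : Fin n) :
    Matrix.toEuclideanLin (Matrix.diagonal d) (EuclideanSpace.basisFun (Fin n) ℝ i)
      = d i • EuclideanSpace.basisFun (Fin n) ℝ i := by
  classical
  ext k
  simp [Matrix.toEuclideanLin_apply, EuclideanSpace.basisFun_apply, Matrix.mulVec_diagonal,
    EuclideanSpace.single_apply, mul_comm]

lemma form_dot (M : Matrix (Fin n) (Fin n) ℝ) (x : EuclideanSpace ℝ (Fin n)) :
    ⟪Matrix.toEuclideanLin M x, x⟫ = ∑ i, ∑ j, M i j * x j * x i := by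
  rw [real_inner_comm]
  simp only [PiLp.inner_apply, RCLike.inner_apply, conj_trivial]
  apply Finset.sum_congr rfl
  intro i _
  simp [Matrix.toEuclideanLin_apply, Matrix.mulVec, dotProduct, Finset.mul_sum]
  exact Finset.sum_mul _ _ _

lemma trunc_form_bound {H : Type*} [NormedAddCommGroup H] [InnerProductSpace ℝ H]
    (v : ℕ → H) (α : ℕ → ℝ) (K : ℝ → H →L[ℝ] H) (hON : Orthonormal ℝ v)
    (l : ℝ) {n m : ℕ} (x : EuclideanSpace ℝ (Fin n))
    (hsupp : ∀ i : Fin n, ¬((i : ℕ) < m) → x i = 0)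
    {amax : ℝ} (hα : ∀ i : ℕ, i < m → α i ≤ amax) :
    ⟪Matrix.toEuclideanLin (truncMat v α K l n) x, x⟫
      ≤ (amax + ∑ j ∈ Finset.range m, ‖K l (v j) - K 0 (v j)‖) *
        ∑ i ∈ Finset.univ.filter (fun i : Fin n => (i : ℕ) < m), (x i) ^ 2 := by
  classical
  set t := Finset.univ.filter (fun i : Fin n => (i : ℕ) < m) with ht
  set D := K l - K 0 with hD
  set δ := ∑ j ∈ Finset.range m, ‖K l (v j) - K 0 (v j)‖ with hδ
  set s2 := ∑ i ∈ t, (x i) ^ 2 with hs2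
  have hs2nonneg : 0 ≤ s2 := Finset.sum_nonneg fun i _ => sq_nonneg _
  set u : H := ∑ i ∈ t, x i • v (i : ℕ) with hu
  have hvn : Orthonormal ℝ (fun i : Fin n => v (i : ℕ)) :=
    hON.comp _ Fin.val_injective
  have hunorm : ‖u‖ ^ 2 = s2 := by
    rw [← real_inner_self_eq_norm_sq, hu, hvn.inner_sum]
    simp [hs2, pow_two]
  have hDu : D u = ∑ j ∈ t, x j • D (v (j : ℕ)) := by
    rw [hu, map_sum]; exact Finset.sum_congr rfl fun j _ => by rw [map_smul]
  have hinner : ⟪D u, u⟫ = ∑ j ∈ t, ∑ i ∈ t, x j * (x i * ⟪D (v (j:ℕ)), v (i:ℕ)⟫) := by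
    rw [hDu, hu, sum_inner]
    refine Finset.sum_congr rfl fun j _ => ?_
    rw [real_inner_smul_left, inner_sum, Finset.mul_sum]
    refine Finset.sum_congr rfl fun i _ => ?_
    rw [real_inner_smul_right]
  have hsplit : ⟪Matrix.toEuclideanLin (truncMat v α K l n) x, x⟫
      = (∑ i : Fin n, α (i : ℕ) * x i ^ 2) + ⟪D u, u⟫ := by
    rw [form_dot]
    have h1 : ∀ i : Fin n, ∑ j : Fin n, truncMat v α K l n i j * x j * x i
        = α (i : ℕ) * x i ^ 2 + ∑ j : Fin n, (⟪D (v (j:ℕ)), v (i:ℕ)⟫ : ℝ) * x j * x i := by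
      intro i
      have : ∀ j : Fin n, truncMat v α K l n i j * x j * x i
          = (if i = j then α (i:ℕ) * x j * x i else 0)
            + (⟪D (v (j:ℕ)), v (i:ℕ)⟫ : ℝ) * x j * x i := by
        intro j
        simp only [truncMat, Matrix.of_apply, Fin.val_inj, add_mul]
        congr 1
        by_cases h : i = j <;> simp [h]
      simp_rw [this, Finset.sum_add_distrib, Finset.sum_ite_eq, Finset.mem_univ, if_true]
      exact congrArg₂ (· + ·) (by ring) (Finset.sum_congr rfl fun j _ => by ring)
    simp_rw [h1, Finset.sum_add_distrib]
    congr 1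
    rw [hinner, Finset.sum_comm]
    have e1 : ∀ j : Fin n, j ∈ Finset.univ → j ∉ t →
        (∑ i : Fin n, (⟪D (v (j:ℕ)), v (i:ℕ)⟫ : ℝ) * x j * x i) = 0 := by
      intro j _ hj
      apply Finset.sum_eq_zero; intro i _
      rw [hsupp j (by simpa [ht] using hj)]; ring
    rw [← Finset.sum_subset (Finset.subset_univ t) e1]
    refine Finset.sum_congr rfl fun j hj => ?_
    have e2 : ∀ i : Fin n, i ∈ Finset.univ → i ∉ t →
        (⟪D (v (j:ℕ)), v (i:ℕ)⟫ : ℝ) * x j * x i = 0 := by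
      intro i _ hi
      rw [hsupp i (by simpa [ht] using hi)]; ring
    rw [← Finset.sum_subset (Finset.subset_univ t) e2]
    exact Finset.sum_congr rfl fun i _ => by ring
  have hdiag : (∑ i : Fin n, α (i : ℕ) * x i ^ 2) ≤ amax * s2 := by
    have e1 : ∀ i : Fin n, i ∈ Finset.univ → i ∉ t → α (i : ℕ) * x i ^ 2 = 0 := by
      intro i _ hi
      rw [hsupp i (by simpa [ht] using hi)]; ring
    rw [← Finset.sum_subset (Finset.subset_univ t) e1, hs2, Finset.mul_sum]
    refine Finset.sum_le_sum fun i hi => ?_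
    exact mul_le_mul_of_nonneg_right (hα _ (by simpa [ht] using hi)) (sq_nonneg _)
  have hxb : ∀ i ∈ t, |x i| ≤ ‖u‖ := by
    intro i hi
    have h1 : x i ^ 2 ≤ s2 :=
      Finset.single_le_sum (f := fun i => x i ^ 2) (fun j _ => sq_nonneg _) hi
    rw [← hunorm] at h1
    calc |x i| = Real.sqrt (x i ^ 2) := (Real.sqrt_sq_eq_abs _).symm
      _ ≤ Real.sqrt (‖u‖ ^ 2) := Real.sqrt_le_sqrt h1
      _ = ‖u‖ := Real.sqrt_sq (norm_nonneg u)
  have hδt : ∑ j ∈ t, ‖D (v (j:ℕ))‖ ≤ δ := by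
    have e : ∑ j ∈ t.image Fin.val, ‖D (v j)‖ = ∑ j ∈ t, ‖D (v (j:ℕ))‖ :=
      Finset.sum_image (fun a _ b _ h => Fin.val_injective h)
    rw [← e, hδ]
    have hsub : t.image Fin.val ⊆ Finset.range m := by
      intro j hj
      simp only [Finset.mem_image, ht, Finset.mem_filter] at hj
      obtain ⟨i, ⟨_, hi⟩, rfl⟩ := hj
      exact Finset.mem_range.mpr hi
    have : ∀ j : ℕ, ‖D (v j)‖ = ‖K l (v j) - K 0 (v j)‖ := by
      intro j; rw [hD]; simp
    simp_rw [this]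
    exact Finset.sum_le_sum_of_subset_of_nonneg hsub fun _ _ _ => norm_nonneg _
  have hδ0 : 0 ≤ δ := Finset.sum_nonneg fun _ _ => norm_nonneg _
  have hDub : ‖D u‖ ≤ δ * ‖u‖ := by
    calc ‖D u‖ ≤ ∑ j ∈ t, ‖x j • D (v (j:ℕ))‖ := hDu ▸ norm_sum_le _ _
      _ = ∑ j ∈ t, |x j| * ‖D (v (j:ℕ))‖ := by
          refine Finset.sum_congr rfl fun j _ => ?_; rw [norm_smul, Real.norm_eq_abs]
      _ ≤ ∑ j ∈ t, ‖u‖ * ‖D (v (j:ℕ))‖ :=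
          Finset.sum_le_sum fun j hj => mul_le_mul_of_nonneg_right (hxb j hj) (norm_nonneg _)
      _ = ‖u‖ * ∑ j ∈ t, ‖D (v (j:ℕ))‖ := by rw [← Finset.mul_sum]
      _ ≤ ‖u‖ * δ := mul_le_mul_of_nonneg_left hδt (norm_nonneg u)
      _ = δ * ‖u‖ := mul_comm _ _
  have hpert : ⟪D u, u⟫ ≤ δ * s2 := by
    calc ⟪D u, u⟫ ≤ ‖D u‖ * ‖u‖ := real_inner_le_norm _ _
      _ ≤ (δ * ‖u‖) * ‖u‖ := mul_le_mul_of_nonneg_right hDub (norm_nonneg _)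
      _ = δ * ‖u‖ ^ 2 := by ring
      _ = δ * s2 := by rw [hunorm]
  rw [hsplit]
  calc (∑ i : Fin n, α (i : ℕ) * x i ^ 2) + ⟪D u, u⟫ ≤ amax * s2 + δ * s2 :=
        add_le_add hdiag hpert
    _ = (amax + δ) * s2 := by ring

end NegCountAux
/-- With the hypotheses of STATEMENT 5: if `0` is in the spectrum of
`A = A⁰` (i.e. `0` is one of the eigenvalues `α_j`) and `neg(A) ≥ 1`, then there exist
`λ* > 0` and `N` such that for all `0 < λ < λ*` and all `n > N`,
`neg(A_n^λ) ≥ neg(A_n)`. -/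
theorem neg_count_lower_bound {H : Type*} [NormedAddCommGroup H]
    [InnerProductSpace ℝ H] [CompleteSpace H]
    (v : ℕ → H) (α : ℕ → ℝ) (K : ℝ → H →L[ℝ] H)
    (hON : Orthonormal ℝ v)
    (hcomp : (Submodule.span ℝ (Set.range v)).topologicalClosure = ⊤)
    (hmono : Monotone α) (htop : Tendsto α atTop atTop)
    (hKsa : ∀ l ∈ Set.Ico (0 : ℝ) 1, IsSelfAdjoint (K l))
    (hKbdd : ∃ C : ℝ, ∀ l ∈ Set.Ico (0 : ℝ) 1, ‖K l‖ ≤ C)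
    (hKstrong : ∀ σ ∈ Set.Ico (0 : ℝ) 1, ∀ u : H,
      Tendsto (fun l => K l u) (nhdsWithin σ (Set.Ico 0 1)) (𝓝 (K σ u)))
    (hH : ∀ l n, (truncMat v α K l n).IsHermitian)
    (h0 : (0 : ℝ) ∈ Set.range α) (hneg : ∃ j, α j < 0) :
    ∃ lstar : ℝ, 0 < lstar ∧ lstar ≤ 1 ∧ ∃ N : ℕ,
      ∀ l : ℝ, 0 < l → l < lstar → ∀ n > N,
        (Finset.univ.filter fun i => (hH 0 n).eigenvalues i < 0).card
          ≤ (Finset.univ.filter fun i => (hH l n).eigenvalues i < 0).card := by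
  classical
  open NegCountAux Module Submodule in
  -- the number of negative eigenvalues of `A`
  obtain ⟨j0, hj0⟩ := h0
  have hex : ∃ k, 0 ≤ α k := ⟨j0, le_of_eq hj0.symm⟩
  set m := Nat.find hex with hm
  have hαm : 0 ≤ α m := Nat.find_spec hex
  have hltm : ∀ k, k < m → α k < 0 := fun k hk => not_le.mp (Nat.find_min hex hk)
  obtain ⟨jn, hjn⟩ := hneg
  have hjnm : jn < m := by
    by_contra hcon
    exact absurd (le_trans hαm (hmono (not_lt.mp hcon))) (not_le.mpr hjn)
  have hm1 : 1 ≤ m := by omega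
  set amax := α (m - 1) with hamaxdef
  have hamaxneg : amax < 0 := hltm _ (by omega)
  have hαle : ∀ i, i < m → α i ≤ amax := fun i hi => hmono (by omega)
  have hαge : ∀ i, m ≤ i → 0 ≤ α i := fun i hi => le_trans hαm (hmono hi)
  -- the perturbation size tends to 0 as l → 0⁺
  have hδtend : Tendsto (fun l => ∑ j ∈ Finset.range m, ‖K l (v j) - K 0 (v j)‖)
      (nhdsWithin 0 (Set.Ico 0 1)) (𝓝 0) := by
    have hj : ∀ j : ℕ, Tendsto (fun l => ‖K l (v j) - K 0 (v j)‖)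
        (nhdsWithin (0:ℝ) (Set.Ico 0 1)) (𝓝 0) := by
      intro j
      have h1 := hKstrong 0 ⟨le_refl 0, zero_lt_one⟩ (v j)
      have h2 : Tendsto (fun l => K l (v j) - K 0 (v j))
          (nhdsWithin (0:ℝ) (Set.Ico 0 1)) (𝓝 0) := by
        simpa using h1.sub (tendsto_const_nhds (x := K 0 (v j)))
      simpa using h2.norm
    have := tendsto_finset_sum (Finset.range m) (fun j _ => hj j)
    simpa using this
  have hev : ∀ᶠ l in nhdsWithin (0:ℝ) (Set.Ico 0 1),
      (∑ j ∈ Finset.range m, ‖K l (v j) - K 0 (v j)‖) < -amax := by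
    have h01 : (0:ℝ) < -amax := by linarith
    exact hδtend.eventually_lt_const h01
  obtain ⟨r, hr, hball⟩ := Metric.mem_nhdsWithin_iff.mp hev
  refine ⟨min r 1, lt_min hr zero_lt_one, min_le_right _ _, m, ?_⟩
  intro l hl0 hlr n hn
  have hl1 : l < 1 := lt_of_lt_of_le hlr (min_le_right r 1)
  have hlI : l ∈ Set.Ico (0:ℝ) 1 := ⟨le_of_lt hl0, hl1⟩
  have hδl : (∑ j ∈ Finset.range m, ‖K l (v j) - K 0 (v j)‖) < -amax := by
    apply hball
    refine ⟨?_, hlI⟩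
    rw [Metric.mem_ball, Real.dist_eq, sub_zero, abs_of_pos hl0]
    exact lt_of_lt_of_le hlr (min_le_left r 1)
  have hmn : m ≤ n := le_of_lt hn
  set t := Finset.univ.filter (fun i : Fin n => (i : ℕ) < m) with htdef
  have htcard : t.card = m := by
    have h1 : t = Finset.image (fun j : Fin m => Fin.castLE hmn j) Finset.univ := by
      ext i
      simp only [htdef, Finset.mem_filter, Finset.mem_univ, true_and, Finset.mem_image]
      constructor
      · intro h; exact ⟨⟨(i : ℕ), h⟩, Fin.ext rfl⟩
      · rintro ⟨j, rfl⟩; exact j.isLt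
    rw [h1, Finset.card_image_of_injective _ (Fin.castLE_injective hmn), Finset.card_univ,
      Fintype.card_fin]
  set s0 := Finset.univ.filter (fun i => (hH 0 n).eigenvalues i < 0) with hs0def
  set sl := Finset.univ.filter (fun i => (hH l n).eigenvalues i < 0) with hsldef
  -- Claim A : s0.card ≤ m
  have claimA : s0.card ≤ m := by
    by_contra hcon
    push_neg at hcon
    set b0 := (hH 0 n).eigenvectorBasis with hb0def
    set U := span ℝ (b0 '' (s0 : Set (Fin n))) with hUdef
    set tc := Finset.univ.filter (fun i : Fin n => ¬((i : ℕ) < m)) with htcdef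
    set W := span ℝ ((EuclideanSpace.basisFun (Fin n) ℝ) '' (tc : Set (Fin n))) with hWdef
    have htc_eq : tc = tᶜ := by
      ext i; simp [htcdef, htdef]
    have htccard : tc.card = n - m := by
      rw [htc_eq, Finset.card_compl, htcard, Fintype.card_fin]
    have hM0diag : truncMat v α K 0 n = Matrix.diagonal (fun i : Fin n => α (i : ℕ)) := by
      ext i j
      by_cases h : i = j <;>
        simp [truncMat, Matrix.diagonal_apply, Fin.val_inj, h]
    have hUcard : s0.card ≤ finrank ℝ U := card_le_finrank_span b0.orthonormal s0
    have hWcard : n - m ≤ finrank ℝ W := by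
      have h : tc.card ≤ finrank ℝ W :=
        card_le_finrank_span (EuclideanSpace.basisFun (Fin n) ℝ).orthonormal tc
      omega
    have hdim : finrank ℝ (EuclideanSpace ℝ (Fin n)) < finrank ℝ U + finrank ℝ W := by
      rw [finrank_euclideanSpace_fin]; omega
    obtain ⟨x, hx0, hxU, hxW⟩ := clash hdim
    have h1 : (inner ℝ (Matrix.toEuclideanLin (truncMat v α K 0 n) x) x : ℝ) < 0 :=
      neg_form b0 (hH 0 n).eigenvalues _ (eigen_hb (hH 0 n)) s0
        (fun i hi => (Finset.mem_filter.mp hi).2) hxU hx0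
    have h2 : (0:ℝ) ≤ (inner ℝ (Matrix.toEuclideanLin (truncMat v α K 0 n) x) x : ℝ) := by
      rw [hM0diag]
      exact pos_form _ (fun i : Fin n => α (i : ℕ)) _ (diag_hb _) tc
        (fun i hi => hαge _ (not_lt.mp (by simpa [htcdef] using hi))) hxW
    linarith
  -- Claim B : m ≤ sl.card
  have claimB : m ≤ sl.card := by
    by_contra hcon
    push_neg at hcon
    set bl := (hH l n).eigenvectorBasis with hbldef
    set slc := Finset.univ.filter (fun i => ¬((hH l n).eigenvalues i < 0)) with hslcdef
    set W := span ℝ (bl '' (slc : Set (Fin n))) with hWdef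
    set U := span ℝ ((EuclideanSpace.basisFun (Fin n) ℝ) '' (t : Set (Fin n))) with hUdef
    have hslc_eq : slc = slᶜ := by
      ext i; simp [hslcdef, hsldef]
    have hslccard : slc.card = n - sl.card := by
      rw [hslc_eq, Finset.card_compl, Fintype.card_fin]
    have hUcard : m ≤ finrank ℝ U := by
      have h : t.card ≤ finrank ℝ U :=
        card_le_finrank_span (EuclideanSpace.basisFun (Fin n) ℝ).orthonormal t
      omega
    have hWcard : n - sl.card ≤ finrank ℝ W := by
      have h : slc.card ≤ finrank ℝ W := card_le_finrank_span bl.orthonormal slc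
      omega
    have hsln : sl.card ≤ n := by
      have := Finset.card_le_univ sl
      simpa using this
    have hdim : finrank ℝ (EuclideanSpace ℝ (Fin n)) < finrank ℝ U + finrank ℝ W := by
      rw [finrank_euclideanSpace_fin]; omega
    obtain ⟨x, hx0, hxU, hxW⟩ := clash hdim
    have hsupp : ∀ i : Fin n, ¬((i : ℕ) < m) → x i = 0 := by
      intro i hi
      have : (EuclideanSpace.basisFun (Fin n) ℝ).repr x i = 0 :=
        repr_eq_zero_of_mem_span _ t hxU (by simp [htdef, hi])
      simpa [EuclideanSpace.basisFun_repr] using this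
    have hbound := trunc_form_bound v α K hON l x hsupp hαle
    have hs2pos : 0 < ∑ i ∈ t, (x i) ^ 2 := by
      have hexi : ∃ i : Fin n, x i ≠ 0 := by
        by_contra hc
        push_neg at hc
        exact hx0 (by ext i; simpa using hc i)
      obtain ⟨i, hi⟩ := hexi
      have hit : i ∈ t := by
        by_contra hit
        exact hi (hsupp i (by simpa [htdef] using hit))
      exact Finset.sum_pos' (fun j _ => sq_nonneg _) ⟨i, hit, by positivity⟩
    have h1 : (inner ℝ (Matrix.toEuclideanLin (truncMat v α K l n) x) x : ℝ) < 0 := by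
      refine lt_of_le_of_lt hbound ?_
      exact mul_neg_of_neg_of_pos (by linarith) hs2pos
    have h2 : (0:ℝ) ≤ (inner ℝ (Matrix.toEuclideanLin (truncMat v α K l n) x) x : ℝ) :=
      pos_form bl (hH l n).eigenvalues _ (eigen_hb (hH l n)) slc
        (fun i hi => not_lt.mp (by simpa [hslcdef] using hi)) hxW
    linarith
  exact le_trans claimA claimB
end
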